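/- Let J_α(v) := ∫_{ℝ³} |v−w|^α μ(w) dw where μ(w) = (2π)^{−3/2} e^{−|w|²/2}. If 2 < α ≤ 3, then there exists a constant C_α > 0 such that J_α(v) ≤ |v|^α + C_α |v|^{α/2} + C_α for all v ∈ ℝ³. -/

import Mathlib

open MeasureTheory Real RealInnerProductSpace

noncomputable section

abbrev R3 := EuclideanSpace ℝ (Fin 3)

/-- The standard Maxwellian (Gaussian) on ℝ³. -/
def mu (w : R3) : ℝ := (2 * π) ^ (-(3:ℝ)/2) * Real.exp (-‖w‖ ^ 2 / 2)

lemma rpow_subadd {q a b : ℝ} (hq0 : 0 ≤ q) (hq1 : q ≤ 1) (ha : 0 ≤ a) (hb : 0 ≤ b) :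
    (a + b) ^ q ≤ a ^ q + b ^ q := by
  lift a to NNReal using ha
  lift b to NNReal using hb
  rw [← NNReal.coe_add, ← NNReal.coe_rpow, ← NNReal.coe_rpow, ← NNReal.coe_rpow,
    ← NNReal.coe_add, NNReal.coe_le_coe]
  exact NNReal.rpow_add_le_add_rpow a b hq0 hq1

lemma sym_key {p : ℝ} (hp1 : 1 ≤ p) (hp2 : p ≤ 2) {t : ℝ} (ht0 : 0 ≤ t) (ht1 : t ≤ 1) :
    (1 + t) ^ p + (1 - t) ^ p ≤ 2 + 2 * t ^ p := by
  set g : ℝ → ℝ := fun t => 2 + 2 * t ^ p - ((1 + t) ^ p + (1 - t) ^ p) with hgdef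
  have hg : ∀ u : ℝ, HasDerivAt g
      (2 * (p * u ^ (p - 1)) - (1 * p * (1 + u) ^ (p - 1) + (-1) * p * (1 - u) ^ (p - 1))) u := by
    intro u
    have h1 : HasDerivAt (fun x : ℝ => x ^ p) (p * u ^ (p - 1)) u :=
      Real.hasDerivAt_rpow_const (Or.inr hp1)
    have h2 : HasDerivAt (fun x : ℝ => (1 + x) ^ p) (1 * p * (1 + u) ^ (p - 1)) u :=
      ((hasDerivAt_id u).const_add 1).rpow_const (Or.inr hp1)
    have h3 : HasDerivAt (fun x : ℝ => (1 - x) ^ p) ((-1) * p * (1 - u) ^ (p - 1)) u :=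
      ((hasDerivAt_id u).const_sub 1).rpow_const (Or.inr hp1)
    exact ((h1.const_mul 2).const_add 2).sub (h2.add h3)
  have hmono : MonotoneOn g (Set.Icc 0 1) := by
    apply monotoneOn_of_deriv_nonneg (convex_Icc 0 1)
    · exact fun u _ => (hg u).continuousAt.continuousWithinAt
    · exact fun u _ => (hg u).differentiableAt.differentiableWithinAt
    · intro u hu
      rw [interior_Icc] at hu
      rw [(hg u).deriv]
      have hq0 : (0:ℝ) ≤ p - 1 := by linarith
      have hq1 : p - 1 ≤ 1 := by linarith
      have hsub : (1 + u) ^ (p - 1) ≤ (1 - u) ^ (p - 1) + 2 * u ^ (p - 1) := by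
        have h := rpow_subadd hq0 hq1 (by linarith [hu.2] : (0:ℝ) ≤ 1 - u)
          (by linarith [hu.1] : (0:ℝ) ≤ 2 * u)
        have he : (1 - u) + 2 * u = 1 + u := by ring
        rw [he] at h
        refine h.trans ?_
        have : (2 * u) ^ (p - 1) ≤ 2 * u ^ (p - 1) := by
          rw [Real.mul_rpow (by norm_num) hu.1.le]
          have h2 : (2:ℝ) ^ (p - 1) ≤ 2 := by
            calc (2:ℝ) ^ (p - 1) ≤ 2 ^ (1:ℝ) :=
              Real.rpow_le_rpow_of_exponent_le one_le_two hq1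
            _ = 2 := Real.rpow_one 2
          exact mul_le_mul_of_nonneg_right h2 (Real.rpow_nonneg hu.1.le _)
        linarith
      have hp0 : 0 ≤ p := by linarith
      nlinarith [Real.rpow_nonneg (by linarith [hu.1] : (0:ℝ) ≤ u) (p-1)]
  have h0 : g 0 = 0 := by
    simp only [hgdef]
    rw [Real.zero_rpow (by linarith : p ≠ 0)]
    norm_num
  have := hmono (Set.mem_Icc.mpr ⟨le_refl 0, zero_le_one⟩) (Set.mem_Icc.mpr ⟨ht0, ht1⟩) ht0
  rw [h0] at this
  simp only [hgdef] at this
  linarith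

lemma sym_key2_aux {p s x : ℝ} (hp1 : 1 ≤ p) (hp2 : p ≤ 2) (hx0 : 0 ≤ x) (hxs : x ≤ s) :
    (s + x) ^ p + (s - x) ^ p ≤ 2 * s ^ p + 2 * x ^ p := by
  have hs : 0 ≤ s := hx0.trans hxs
  rcases eq_or_lt_of_le hs with hs0 | hs0
  · have hx : x = 0 := le_antisymm (hxs.trans hs0.symm.le) hx0
    subst hx
    rw [← hs0]
    simp [Real.zero_rpow (by linarith : p ≠ 0)]
  · set t := x / s with htdef
    have ht0 : 0 ≤ t := div_nonneg hx0 hs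
    have ht1 : t ≤ 1 := (div_le_one hs0).mpr hxs
    have hx' : x = s * t := by rw [htdef, mul_div_cancel₀ _ hs0.ne']
    have hsx : s + x = s * (1 + t) := by rw [mul_add, mul_one, ← hx']
    have hsx' : s - x = s * (1 - t) := by rw [mul_sub, mul_one, ← hx']
    rw [hsx, hsx', hx', Real.mul_rpow hs (by linarith), Real.mul_rpow hs (by linarith),
      Real.mul_rpow hs ht0]
    have := sym_key hp1 hp2 ht0 ht1
    nlinarith [Real.rpow_nonneg hs p, Real.rpow_nonneg ht0 p]

lemma sym_key2 {p s x : ℝ} (hp1 : 1 ≤ p) (hp2 : p ≤ 2) (hs : 0 ≤ s) (hx : |x| ≤ s) :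
    (s + x) ^ p + (s - x) ^ p ≤ 2 * s ^ p + 2 * |x| ^ p := by
  rcases le_total 0 x with hx0 | hx0
  · rw [abs_of_nonneg hx0] at *
    exact sym_key2_aux hp1 hp2 hx0 hx
  · rw [abs_of_nonpos hx0] at *
    have := sym_key2_aux hp1 hp2 (by linarith : (0:ℝ) ≤ -x) hx
    have he1 : s + -x = s - x := by ring
    have he2 : s - -x = s + x := by ring
    rw [he1, he2] at this
    linarith

lemma bern_key {p A B : ℝ} (hp1 : 1 ≤ p) (hp2 : p ≤ 2) (hA : 0 ≤ A) (hB : 0 ≤ B) :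
    (A + B) ^ p ≤ A ^ p + 2 * p * (A ^ (p - 1) * B) + 4 * B ^ p := by
  have hp0 : p ≠ 0 := by linarith
  rcases le_total B A with hBA | hAB
  · -- B ≤ A
    rcases eq_or_lt_of_le hA with hA0 | hA0
    · have hB0 : B = 0 := le_antisymm (hBA.trans hA0.symm.le) hB
      subst hB0
      rw [← hA0]
      simp [Real.zero_rpow hp0]
    · -- Bernoulli: (A+B)^p ≤ A^p + p * (A+B)^(p-1) * B
      have hS0 : 0 < A + B := by linarith
      set S := A + B with hSdef
      have hy0 : 0 < A / S := div_pos hA0 hS0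
      have key : 1 + p * (A / S - 1) ≤ (A / S) ^ p := by
        have := one_add_mul_self_le_rpow_one_add (by linarith : (-1:ℝ) ≤ A / S - 1) hp1
        simpa using this
      -- multiply by S^p
      have hSp : 0 < S ^ p := Real.rpow_pos_of_pos hS0 p
      have hmul := mul_le_mul_of_nonneg_left key hSp.le
      have hSy : S ^ p * (A / S) ^ p = A ^ p := by
        rw [← Real.mul_rpow hS0.le hy0.le, mul_div_cancel₀ _ hS0.ne']
      have hSS : S ^ p = S * S ^ (p - 1) := by
        nth_rewrite 1 [show p = 1 + (p - 1) by ring]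
        exact Real.rpow_one_add' hS0.le (by rw [show 1 + (p-1) = p by ring]; exact hp0)
      have hSA : S ^ p * (A / S) = A * S ^ (p - 1) := by
        rw [hSS]; field_simp
      have hbern : S ^ p ≤ A ^ p + p * S ^ (p - 1) * B := by
        have hexp : S ^ p * (1 + p * (A / S - 1))
            = S ^ p + p * (A * S ^ (p - 1)) - p * S ^ p := by
          linear_combination p * hSA
        rw [hexp, hSy] at hmul
        have : p * S ^ p - p * (A * S ^ (p-1)) = p * S ^ (p-1) * B := by
          rw [hSS]; ring
        linarith
      have hS2A : S ^ (p - 1) ≤ 2 * A ^ (p - 1) := by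
        have h1 : S ^ (p - 1) ≤ (2 * A) ^ (p - 1) :=
          Real.rpow_le_rpow hS0.le (by linarith) (by linarith)
        have h2 : (2 * A) ^ (p - 1) = 2 ^ (p - 1) * A ^ (p - 1) :=
          Real.mul_rpow (by norm_num) hA
        have h3 : (2:ℝ) ^ (p - 1) ≤ 2 := by
          calc (2:ℝ) ^ (p - 1) ≤ 2 ^ (1:ℝ) :=
            Real.rpow_le_rpow_of_exponent_le one_le_two (by linarith)
          _ = 2 := Real.rpow_one 2
        rw [h2] at h1
        exact h1.trans (mul_le_mul_of_nonneg_right h3 (Real.rpow_nonneg hA _))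
      have hBp : 0 ≤ B ^ p := Real.rpow_nonneg hB p
      have hfin : p * S ^ (p - 1) * B ≤ 2 * p * (A ^ (p - 1) * B) := by
        have := mul_le_mul_of_nonneg_right hS2A hB
        nlinarith
      linarith
  · -- A ≤ B
    have h1 : (A + B) ^ p ≤ (2 * B) ^ p :=
      Real.rpow_le_rpow (by linarith) (by linarith) (by linarith)
    have h2 : (2 * B) ^ p = 2 ^ p * B ^ p := Real.mul_rpow (by norm_num) hB
    have h3 : (2:ℝ) ^ p ≤ 4 := by
      calc (2:ℝ) ^ p ≤ 2 ^ (2:ℝ) := Real.rpow_le_rpow_of_exponent_le one_le_two hp2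
      _ = 4 := by
        rw [show (2:ℝ) = ((2:ℕ):ℝ) from by norm_num, Real.rpow_natCast]; norm_num
    have hAp : 0 ≤ A ^ p := Real.rpow_nonneg hA p
    have hcross : 0 ≤ 2 * p * (A ^ (p-1) * B) := by
      have := Real.rpow_nonneg hA (p-1)
      positivity
    have hBp : 0 ≤ B ^ p := Real.rpow_nonneg hB p
    calc (A + B) ^ p ≤ 2 ^ p * B ^ p := by rw [← h2]; exact h1
    _ ≤ 4 * B ^ p := mul_le_mul_of_nonneg_right h3 hBp
    _ ≤ A ^ p + 2 * p * (A ^ (p-1) * B) + 4 * B ^ p := by linarith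

lemma sq_rpow {x q : ℝ} (hx : 0 ≤ x) : ((x ^ 2) : ℝ) ^ q = x ^ (2 * q) := by
  rw [← Real.rpow_natCast x 2, ← Real.rpow_mul hx]
  norm_num

lemma pointwise_key {α : ℝ} (h1 : 2 < α) (h2 : α ≤ 3) (v w : R3) :
    ‖v - w‖ ^ α + ‖v + w‖ ^ α ≤ 2 * ‖v‖ ^ α + 6 * (‖v‖ ^ (α - 2) * ‖w‖ ^ (2:ℝ))
      + 8 * ‖w‖ ^ α + 8 * (‖v‖ ^ (α / 2) * ‖w‖ ^ (α / 2)) := by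
  set p := α / 2 with hpdef
  have hp1 : 1 ≤ p := by rw [hpdef]; linarith
  have hp2 : p ≤ 2 := by rw [hpdef]; linarith
  set s : ℝ := ‖v‖ ^ 2 + ‖w‖ ^ 2 with hsdef
  set x : ℝ := 2 * ⟪v, w⟫ with hxdef
  have hs0 : (0:ℝ) ≤ s := by positivity
  have hxs : |x| ≤ s := by
    rw [hxdef, abs_mul, abs_two]
    have h := abs_real_inner_le_norm v w
    nlinarith [sq_nonneg (‖v‖ - ‖w‖), norm_nonneg v, norm_nonneg w]
  have hvw1 : ‖v - w‖ ^ α = (s - x) ^ p := by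
    have : (‖v - w‖ ^ 2 : ℝ) = s - x := by
      rw [norm_sub_sq_real]; ring
    rw [← this, sq_rpow (norm_nonneg _)]
    congr 1
    rw [hpdef]; ring
  have hvw2 : ‖v + w‖ ^ α = (s + x) ^ p := by
    have : (‖v + w‖ ^ 2 : ℝ) = s + x := by
      rw [norm_add_sq_real]; ring
    rw [← this, sq_rpow (norm_nonneg _)]
    congr 1
    rw [hpdef]; ring
  rw [hvw1, hvw2]
  have hmain := sym_key2 hp1 hp2 hs0 hxs
  -- bound s ^ p
  have hsp : s ^ p ≤ ‖v‖ ^ α + 2 * p * (‖v‖ ^ (α - 2) * ‖w‖ ^ (2:ℝ)) + 4 * ‖w‖ ^ α := by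
    have hb := bern_key hp1 hp2 (by positivity : (0:ℝ) ≤ ‖v‖ ^ 2) (by positivity : (0:ℝ) ≤ ‖w‖ ^ 2)
    have e1 : ((‖v‖ ^ 2 : ℝ)) ^ p = ‖v‖ ^ α := by rw [sq_rpow (norm_nonneg _)]; congr 1; rw [hpdef]; ring
    have e2 : ((‖w‖ ^ 2 : ℝ)) ^ p = ‖w‖ ^ α := by rw [sq_rpow (norm_nonneg _)]; congr 1; rw [hpdef]; ring
    have e3 : ((‖v‖ ^ 2 : ℝ)) ^ (p - 1) = ‖v‖ ^ (α - 2) := by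
      rw [sq_rpow (norm_nonneg _)]; congr 1; rw [hpdef]; ring
    have e4 : (‖w‖ ^ 2 : ℝ) = ‖w‖ ^ (2:ℝ) := by
      rw [show ((2:ℝ)) = ((2:ℕ):ℝ) from by norm_num, Real.rpow_natCast]
    rw [e1, e2, e3] at hb
    rw [hsdef, ← e4]
    exact hb
  -- bound |x| ^ p
  have hxp : |x| ^ p ≤ 4 * (‖v‖ ^ (α / 2) * ‖w‖ ^ (α / 2)) := by
    have hxb : |x| ≤ 2 * (‖v‖ * ‖w‖) := by
      rw [hxdef, abs_mul, abs_two]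
      have := abs_real_inner_le_norm v w
      linarith
    have h1 : |x| ^ p ≤ (2 * (‖v‖ * ‖w‖)) ^ p :=
      Real.rpow_le_rpow (abs_nonneg _) hxb (by linarith)
    have h2 : (2 * (‖v‖ * ‖w‖)) ^ p = 2 ^ p * (‖v‖ ^ p * ‖w‖ ^ p) := by
      rw [Real.mul_rpow (by norm_num) (by positivity), Real.mul_rpow (norm_nonneg _) (norm_nonneg _)]
    have h3 : (2:ℝ) ^ p ≤ 4 := by
      calc (2:ℝ) ^ p ≤ 2 ^ (2:ℝ) := Real.rpow_le_rpow_of_exponent_le one_le_two hp2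
      _ = 4 := by
        rw [show ((2:ℝ)) = ((2:ℕ):ℝ) from by norm_num, Real.rpow_natCast]; norm_num
    rw [h2] at h1
    refine h1.trans ?_
    rw [hpdef] at *
    exact mul_le_mul_of_nonneg_right h3 (by positivity)
  have hp32 : p ≤ 3 / 2 := by rw [hpdef]; linarith
  have hcr : (0:ℝ) ≤ ‖v‖ ^ (α - 2) * ‖w‖ ^ (2:ℝ) := by positivity
  nlinarith [Real.rpow_nonneg (norm_nonneg w) α]

lemma mu_nonneg (w : R3) : 0 ≤ mu w := by
  unfold mu; positivity

lemma mu_continuous : Continuous mu := by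
  unfold mu
  fun_prop

lemma gauss_integrable {b : ℝ} (hb : 0 < b) :
    Integrable (fun w : R3 => Real.exp (-b * ‖w‖ ^ 2)) := by
  have h := (GaussianFourier.integrable_cexp_neg_mul_sq_norm_add
    (b := (b:ℂ)) (by simpa using hb) 0 (0 : R3)).norm
  refine h.congr ?_
  filter_upwards with w
  rw [Complex.norm_exp]
  congr 1
  rw [← Complex.ofReal_pow, ← Complex.ofReal_neg, ← Complex.ofReal_mul, zero_mul, add_zero,
    Complex.ofReal_re]

lemma gauss_integral : ∫ w : R3, Real.exp (-(1/2:ℝ) * ‖w‖ ^ 2) = (2 * π) ^ ((3:ℝ)/2) := by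
  rw [GaussianFourier.integral_rexp_neg_mul_sq_norm (by norm_num : (0:ℝ) < 1/2)]
  have : (Module.finrank ℝ R3 : ℝ) = 3 := by
    simp [finrank_euclideanSpace]
  rw [this]
  norm_num
  rw [show π / (1/2) = 2 * π by ring]

lemma exp_eq (w : R3) : Real.exp (-‖w‖ ^ 2 / 2) = Real.exp (-(1/2:ℝ) * ‖w‖ ^ 2) := by
  congr 1; ring

lemma mu_integrable : Integrable mu := by
  have h := (gauss_integrable (show (0:ℝ) < 1/2 by norm_num)).const_mul ((2*π) ^ (-(3:ℝ)/2))
  refine h.congr ?_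
  filter_upwards with w
  unfold mu
  rw [exp_eq]

lemma mu_integral : ∫ w : R3, mu w = 1 := by
  unfold mu
  simp_rw [exp_eq]
  rw [integral_const_mul, gauss_integral, ← Real.rpow_add (by positivity : (0:ℝ) < 2*π)]
  norm_num

lemma mom_integrable {β : ℝ} (hβ : 0 < β) :
    Integrable (fun w : R3 => ‖w‖ ^ β * mu w) := by
  set c := (2*π) ^ (-(3:ℝ)/2) with hcdef
  have hc : (0:ℝ) ≤ c := by positivity
  have hdom := (gauss_integrable (show (0:ℝ) < 1/4 by norm_num)).const_mul (c * Real.exp (β^2))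
  refine hdom.mono ?_ (ae_of_all _ fun w => ?_)
  · exact ((continuous_norm.rpow_const fun x => Or.inr hβ.le).mul mu_continuous).aestronglyMeasurable
  · have hfm : 0 ≤ ‖w‖ ^ β * mu w := mul_nonneg (Real.rpow_nonneg (norm_nonneg w) β) (mu_nonneg w)
    rw [Real.norm_eq_abs, abs_of_nonneg hfm, Real.norm_eq_abs, abs_of_nonneg (by positivity)]
    have h1 : ‖w‖ ≤ Real.exp ‖w‖ := by linarith [Real.add_one_le_exp ‖w‖]
    have h2 : ‖w‖ ^ β ≤ Real.exp (‖w‖ * β) := by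
      rw [Real.exp_mul]
      exact Real.rpow_le_rpow (norm_nonneg w) h1 hβ.le
    have h3 : ‖w‖ ^ β * mu w ≤ c * (Real.exp (‖w‖ * β) * Real.exp (-‖w‖^2/2)) := by
      unfold mu
      rw [← hcdef]
      have := mul_le_mul_of_nonneg_right h2 (Real.exp_nonneg (-‖w‖^2/2))
      nlinarith [Real.exp_nonneg (-‖w‖^2/2), Real.exp_nonneg (‖w‖*β)]
    refine h3.trans ?_
    rw [← Real.exp_add, mul_assoc, ← Real.exp_add]
    refine mul_le_mul_of_nonneg_left (Real.exp_le_exp.mpr ?_) hc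
    nlinarith [sq_nonneg (‖w‖/2 - β)]

lemma two_rpow_bound {a b q : ℝ} (ha : 0 ≤ a) (hb : 0 ≤ b) (hq : 0 ≤ q) :
    (a + b) ^ q ≤ 2 ^ q * a ^ q + 2 ^ q * b ^ q := by
  have h2a : (0:ℝ) ≤ 2 ^ q * a ^ q := by positivity
  have h2b : (0:ℝ) ≤ 2 ^ q * b ^ q := by positivity
  rcases le_total a b with h | h
  · have : (a + b) ^ q ≤ (2 * b) ^ q := Real.rpow_le_rpow (by linarith) (by linarith) hq
    rw [Real.mul_rpow (by norm_num) hb] at this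
    linarith
  · have : (a + b) ^ q ≤ (2 * a) ^ q := Real.rpow_le_rpow (by linarith) (by linarith) hq
    rw [Real.mul_rpow (by norm_num) ha] at this
    linarith

lemma integrable_shift {α : ℝ} (hα : 0 < α) (v : R3) (g : R3 → R3) (hg : Continuous g)
    (hb : ∀ w, ‖g w‖ ≤ ‖v‖ + ‖w‖) : Integrable (fun w => ‖g w‖ ^ α * mu w) := by
  have hdom : Integrable (fun w : R3 =>
      (2 ^ α * ‖v‖ ^ α) * mu w + 2 ^ α * (‖w‖ ^ α * mu w)) :=
    (mu_integrable.const_mul _).add ((mom_integrable hα).const_mul _)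
  refine hdom.mono ?_ (ae_of_all _ fun w => ?_)
  · exact ((hg.norm.rpow_const fun x => Or.inr hα.le).mul mu_continuous).aestronglyMeasurable
  · have hfm : 0 ≤ ‖g w‖ ^ α * mu w :=
      mul_nonneg (Real.rpow_nonneg (norm_nonneg _) α) (mu_nonneg w)
    rw [Real.norm_eq_abs, abs_of_nonneg hfm, Real.norm_eq_abs]
    have h1 : ‖g w‖ ^ α ≤ 2 ^ α * ‖v‖ ^ α + 2 ^ α * ‖w‖ ^ α := by
      refine (Real.rpow_le_rpow (norm_nonneg _) (hb w) hα.le).trans ?_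
      exact two_rpow_bound (norm_nonneg v) (norm_nonneg w) hα.le
    have h2 : ‖g w‖ ^ α * mu w ≤ (2 ^ α * ‖v‖ ^ α) * mu w + 2 ^ α * (‖w‖ ^ α * mu w) := by
      have := mul_le_mul_of_nonneg_right h1 (mu_nonneg w)
      nlinarith [mu_nonneg w]
    exact h2.trans (le_abs_self _)

lemma symm_int (α : ℝ) (v : R3) :
    ∫ w : R3, ‖v + w‖ ^ α * mu w = ∫ w : R3, ‖v - w‖ ^ α * mu w := by
  have h := MeasureTheory.integral_neg_eq_self (fun w : R3 => ‖v + w‖ ^ α * mu w) volume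
  rw [← h]
  congr 1
  funext w
  rw [show v + -w = v - w from (sub_eq_add_neg v w).symm]
  unfold mu
  rw [norm_neg]

theorem stmt0 (α : ℝ) (h1 : 2 < α) (h2 : α ≤ 3) :
    ∃ C : ℝ, 0 < C ∧ ∀ v : R3,
      (∫ w : R3, ‖v - w‖ ^ α * mu w) ≤ ‖v‖ ^ α + C * ‖v‖ ^ (α / 2) + C := by
  have hα0 : (0:ℝ) < α := by linarith
  set K2 : ℝ := ∫ w : R3, ‖w‖ ^ (2:ℝ) * mu w with hK2
  set Ka : ℝ := ∫ w : R3, ‖w‖ ^ α * mu w with hKa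
  set Kh : ℝ := ∫ w : R3, ‖w‖ ^ (α/2) * mu w with hKh
  have hK2n : 0 ≤ K2 := integral_nonneg fun w =>
    mul_nonneg (Real.rpow_nonneg (norm_nonneg w) _) (mu_nonneg w)
  have hKan : 0 ≤ Ka := integral_nonneg fun w =>
    mul_nonneg (Real.rpow_nonneg (norm_nonneg w) _) (mu_nonneg w)
  have hKhn : 0 ≤ Kh := integral_nonneg fun w =>
    mul_nonneg (Real.rpow_nonneg (norm_nonneg w) _) (mu_nonneg w)
  refine ⟨3*K2 + 4*Ka + 4*Kh + 1, by linarith, fun v => ?_⟩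
  have hf1 : Integrable (fun w : R3 => ‖v - w‖ ^ α * mu w) :=
    integrable_shift hα0 v (fun w => v - w) (continuous_const.sub continuous_id)
      (fun w => norm_sub_le v w)
  have hf2 : Integrable (fun w : R3 => ‖v + w‖ ^ α * mu w) :=
    integrable_shift hα0 v (fun w => v + w) (continuous_const.add continuous_id)
      (fun w => norm_add_le v w)
  -- the dominating function
  have hG : Integrable (fun w : R3 => (2 * ‖v‖ ^ α) * mu w
      + (6 * ‖v‖ ^ (α - 2)) * (‖w‖ ^ (2:ℝ) * mu w)
      + 8 * (‖w‖ ^ α * mu w)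
      + (8 * ‖v‖ ^ (α/2)) * (‖w‖ ^ (α/2) * mu w)) := by
    exact (((mu_integrable.const_mul _).add
      ((mom_integrable (by norm_num : (0:ℝ) < 2)).const_mul _)).add
      ((mom_integrable hα0).const_mul _)).add
      ((mom_integrable (by linarith : (0:ℝ) < α/2)).const_mul _)
  have hsum : ∫ w : R3, (‖v - w‖ ^ α * mu w + ‖v + w‖ ^ α * mu w)
      = 2 * ∫ w : R3, ‖v - w‖ ^ α * mu w := by
    rw [integral_add hf1 hf2, symm_int α v]; ring
  have hmono : ∫ w : R3, (‖v - w‖ ^ α * mu w + ‖v + w‖ ^ α * mu w)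
      ≤ ∫ w : R3, ((2 * ‖v‖ ^ α) * mu w
      + (6 * ‖v‖ ^ (α - 2)) * (‖w‖ ^ (2:ℝ) * mu w)
      + 8 * (‖w‖ ^ α * mu w)
      + (8 * ‖v‖ ^ (α/2)) * (‖w‖ ^ (α/2) * mu w)) := by
    refine integral_mono (hf1.add hf2) hG fun w => ?_
    have h := mul_le_mul_of_nonneg_right (pointwise_key h1 h2 v w) (mu_nonneg w)
    simp only []
    nlinarith [mu_nonneg w]
  have hGval : ∫ w : R3, ((2 * ‖v‖ ^ α) * mu w
      + (6 * ‖v‖ ^ (α - 2)) * (‖w‖ ^ (2:ℝ) * mu w)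
      + 8 * (‖w‖ ^ α * mu w)
      + (8 * ‖v‖ ^ (α/2)) * (‖w‖ ^ (α/2) * mu w))
      = 2 * ‖v‖ ^ α + (6 * ‖v‖ ^ (α - 2)) * K2 + 8 * Ka + (8 * ‖v‖ ^ (α/2)) * Kh := by
    have i1 : Integrable (fun w : R3 => (2 * ‖v‖ ^ α) * mu w) := mu_integrable.const_mul _
    have i2 : Integrable (fun w : R3 => (6 * ‖v‖ ^ (α - 2)) * (‖w‖ ^ (2:ℝ) * mu w)) :=
      (mom_integrable (by norm_num : (0:ℝ) < 2)).const_mul _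
    have i3 : Integrable (fun w : R3 => 8 * (‖w‖ ^ α * mu w)) :=
      (mom_integrable hα0).const_mul _
    have i4 : Integrable (fun w : R3 => (8 * ‖v‖ ^ (α/2)) * (‖w‖ ^ (α/2) * mu w)) :=
      (mom_integrable (by linarith : (0:ℝ) < α/2)).const_mul _
    have i12 : Integrable (fun w : R3 => (2 * ‖v‖ ^ α) * mu w
        + (6 * ‖v‖ ^ (α - 2)) * (‖w‖ ^ (2:ℝ) * mu w)) := i1.add i2
    have i123 : Integrable (fun w : R3 => (2 * ‖v‖ ^ α) * mu w
        + (6 * ‖v‖ ^ (α - 2)) * (‖w‖ ^ (2:ℝ) * mu w) + 8 * (‖w‖ ^ α * mu w)) := i12.add i3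
    rw [integral_add i123 i4, integral_add i12 i3, integral_add i1 i2,
      integral_const_mul, integral_const_mul, integral_const_mul, integral_const_mul,
      mu_integral, ← hK2, ← hKa, ← hKh]
    ring
  have hbd : ∫ w : R3, ‖v - w‖ ^ α * mu w
      ≤ ‖v‖ ^ α + (3 * ‖v‖ ^ (α - 2)) * K2 + 4 * Ka + (4 * ‖v‖ ^ (α/2)) * Kh := by
    rw [hGval] at hmono
    rw [hsum] at hmono
    linarith
  have hva : ‖v‖ ^ (α - 2) ≤ 1 + ‖v‖ ^ (α/2) := by
    rcases le_total ‖v‖ 1 with hv | hv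
    · have := Real.rpow_le_one (norm_nonneg v) hv (by linarith : (0:ℝ) ≤ α - 2)
      have h0 : 0 ≤ ‖v‖ ^ (α/2) := Real.rpow_nonneg (norm_nonneg v) _
      linarith
    · have := Real.rpow_le_rpow_of_exponent_le hv (by linarith : α - 2 ≤ α/2)
      linarith
  have hvh : 0 ≤ ‖v‖ ^ (α/2) := Real.rpow_nonneg (norm_nonneg v) _
  nlinarith [mul_le_mul_of_nonneg_right hva (hK2n)]
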